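/- Let (X_opt, Y_opt) ∈ 𝕆^{n×k} × 𝕆^{m×k} be a global maximizer of F over 𝕆^{n×k} × 𝕆^{m×k}, where C ≠ 0. Then X_optᵀ C Y_opt is symmetric and is either positive semidefinite or negative semidefinite. -/

import Mathlib

open Matrix

namespace OCCA

variable {k : ℕ}

noncomputable def Hh (w : Fin k → ℝ) : Matrix (Fin k) (Fin k) ℝ :=
  1 - (2 / (w ⬝ᵥ w)) • Matrix.vecMulVec w w

lemma vecMulVec_mul_vecMulVec (w x y z : Fin k → ℝ) :
    vecMulVec w x * vecMulVec y z = (x ⬝ᵥ y) • vecMulVec w z := by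
  ext p q
  simp only [mul_apply, vecMulVec_apply, Matrix.smul_apply, smul_eq_mul, dotProduct]
  rw [Finset.sum_mul]
  exact Finset.sum_congr rfl fun l _ => by ring

lemma Hh_transpose (w : Fin k → ℝ) : (Hh w)ᵀ = Hh w := by
  unfold Hh
  rw [transpose_sub, transpose_one, transpose_smul]
  congr 1
  ext p q
  simp [vecMulVec_apply, mul_comm]

lemma Hh_mul_Hh {w : Fin k → ℝ} (hw : w ⬝ᵥ w ≠ 0) : Hh w * Hh w = 1 := by
  have hPP := vecMulVec_mul_vecMulVec w w w w
  have hs : 2 / (w ⬝ᵥ w) * (2 / (w ⬝ᵥ w)) * (w ⬝ᵥ w) = (2 / (w ⬝ᵥ w)) + (2 / (w ⬝ᵥ w)) := by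
    field_simp; ring
  unfold Hh
  rw [Matrix.sub_mul, Matrix.mul_sub, Matrix.mul_sub, Matrix.one_mul, Matrix.mul_one,
    Matrix.smul_mul, Matrix.mul_smul, Matrix.mul_smul, hPP, smul_smul, smul_smul,
    Matrix.one_mul, hs, add_smul]
  abel

lemma Hh_orth {w : Fin k → ℝ} (hw : w ⬝ᵥ w ≠ 0) : (Hh w)ᵀ * Hh w = 1 := by
  rw [Hh_transpose]; exact Hh_mul_Hh hw

lemma trace_mul_vecMulVec (M : Matrix (Fin k) (Fin k) ℝ) (w x : Fin k → ℝ) :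
    trace (M * vecMulVec w x) = x ⬝ᵥ (M *ᵥ w) := by
  simp only [trace, diag, mul_apply, vecMulVec_apply, dotProduct, mulVec, Finset.mul_sum]
  exact Finset.sum_congr rfl fun p _ => Finset.sum_congr rfl fun l _ => by ring

lemma trace_mul_Hh (M : Matrix (Fin k) (Fin k) ℝ) (w : Fin k → ℝ) :
    trace (M * Hh w) = trace M - (2 / (w ⬝ᵥ w)) * (w ⬝ᵥ (M *ᵥ w)) := by
  unfold Hh
  rw [Matrix.mul_sub, Matrix.mul_one, Matrix.mul_smul, trace_sub, trace_smul,
    trace_mul_vecMulVec, smul_eq_mul]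

lemma vecMulVec_mulVec' (w x y : Fin k → ℝ) :
    vecMulVec w x *ᵥ y = (x ⬝ᵥ y) • w := by
  ext p
  simp only [mulVec, dotProduct, vecMulVec_apply, Pi.smul_apply, smul_eq_mul]
  rw [Finset.sum_mul]
  exact Finset.sum_congr rfl fun l _ => by ring

lemma Hh_mulVec (w x : Fin k → ℝ) :
    Hh w *ᵥ x = x - ((2 / (w ⬝ᵥ w)) * (w ⬝ᵥ x)) • w := by
  unfold Hh
  rw [sub_mulVec, one_mulVec, smul_mulVec, vecMulVec_mulVec', smul_smul]

variable {M : Matrix (Fin k) (Fin k) ℝ}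

lemma quad_nonneg (h : ∀ O : Matrix (Fin k) (Fin k) ℝ, Oᵀ * O = 1 → trace (M * O) ≤ trace M)
    (x : Fin k → ℝ) : 0 ≤ x ⬝ᵥ M *ᵥ x := by
  by_cases hx : x = 0
  · simp [hx]
  · have h0 : x ⬝ᵥ x ≠ 0 := fun hf => hx (dotProduct_self_eq_zero.mp hf)
    have hnn : 0 ≤ x ⬝ᵥ x := Finset.sum_nonneg fun i _ => mul_self_nonneg _
    have hc : 0 < x ⬝ᵥ x := lt_of_le_of_ne hnn (Ne.symm h0)
    have hle := h (Hh x) (Hh_orth h0)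
    rw [trace_mul_Hh] at hle
    have h2 : 0 ≤ (2 / (x ⬝ᵥ x)) * (x ⬝ᵥ M *ᵥ x) := by linarith
    nlinarith [div_pos (by norm_num : (0:ℝ) < 2) hc]

lemma entry_ineq (h : ∀ O : Matrix (Fin k) (Fin k) ℝ, Oᵀ * O = 1 → trace (M * O) ≤ trace M)
    (i j : Fin k) (hij : i ≠ j) (r : ℝ) :
    r * (M j i - M i j) ≤ r ^ 2 * (M i i + M j j) := by
  set u : Fin k → ℝ := Pi.single i 1 with hu
  set v : Fin k → ℝ := Pi.single i 1 + r • (Pi.single j 1 : Fin k → ℝ) with hv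
  have hij' : j ≠ i := hij.symm
  have huu : u ⬝ᵥ u = 1 := by simp [hu]
  have hvv : v ⬝ᵥ v = 1 + r ^ 2 := by
    simp [hv, hij, hij', Pi.single_apply]; ring
  have huv : u ⬝ᵥ v = 1 := by simp [hu, hv, hij, Pi.single_apply]
  have hMuu : u ⬝ᵥ M *ᵥ u = M i i := by simp [hu, mulVec_single]
  have hMvv : v ⬝ᵥ M *ᵥ v = M i i + r * M i j + r * M j i + r ^ 2 * M j j := by
    simp [hv, mulVec_single, mulVec_add, mulVec_smul, Pi.single_apply, hij, hij']
    ring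
  have hMvu : v ⬝ᵥ M *ᵥ u = M i i + r * M j i := by
    simp [hu, hv, mulVec_single, Pi.single_apply, hij, hij']
  have hu0 : u ⬝ᵥ u ≠ 0 := by rw [huu]; norm_num
  have hv0 : v ⬝ᵥ v ≠ 0 := by rw [hvv]; positivity
  have horth : (Hh u * Hh v)ᵀ * (Hh u * Hh v) = 1 := by
    rw [transpose_mul, Matrix.mul_assoc, ← Matrix.mul_assoc (Hh u)ᵀ, Hh_orth hu0,
      Matrix.one_mul, Hh_orth hv0]
  have hle := h _ horth
  rw [← Matrix.mul_assoc, trace_mul_Hh, trace_mul_Hh] at hle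
  have e1 : (M * Hh u) *ᵥ v = M *ᵥ v - ((2 / (u ⬝ᵥ u)) * (u ⬝ᵥ v)) • (M *ᵥ u) := by
    rw [← mulVec_mulVec, Hh_mulVec, mulVec_sub, mulVec_smul]
  have e2 : v ⬝ᵥ (M * Hh u) *ᵥ v =
      (v ⬝ᵥ M *ᵥ v) - ((2 / (u ⬝ᵥ u)) * (u ⬝ᵥ v)) * (v ⬝ᵥ M *ᵥ u) := by
    rw [e1, dotProduct_sub, dotProduct_smul, smul_eq_mul]
  rw [e2, huu, huv, hvv, hMuu, hMvv, hMvu] at hle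
  have h2 : (0:ℝ) < 1 + r ^ 2 := by positivity
  have hne : (1:ℝ) + r ^ 2 ≠ 0 := ne_of_gt h2
  field_simp at hle
  nlinarith [hle]

lemma aux_psd (h : ∀ O : Matrix (Fin k) (Fin k) ℝ, Oᵀ * O = 1 → trace (M * O) ≤ trace M) :
    M.IsSymm ∧ M.PosSemidef := by
  have hsym : M.IsSymm := by
    unfold Matrix.IsSymm
    ext i j
    rw [transpose_apply]
    by_cases hij : i = j
    · rw [hij]
    · have h1 := entry_ineq h i j hij
      set b := M j i - M i j with hb
      set s := M i i + M j j with hs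
      by_contra hne
      have hbne : b ≠ 0 := sub_ne_zero.mpr hne
      have hb2 : 0 < b ^ 2 := by positivity
      have hs1 : 1 ≤ s := by
        have := h1 b
        nlinarith
      have hs0 : 0 < s := by linarith
      have hr := h1 (b / (2 * s))
      have hsne : s ≠ 0 := ne_of_gt hs0
      field_simp at hr
      nlinarith [hb2, hs0, mul_pos hb2 hs0]
  have hherm : M.IsHermitian := by
    rw [Matrix.IsHermitian, conjTranspose_eq_transpose_of_trivial]
    exact hsym
  refine ⟨hsym, PosSemidef.of_dotProduct_mulVec_nonneg hherm fun x => ?_⟩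
  simpa using quad_nonneg h x

lemma key_lemma (M : Matrix (Fin k) (Fin k) ℝ)
    (h : ∀ O : Matrix (Fin k) (Fin k) ℝ, Oᵀ * O = 1 → trace (M * O) ^ 2 ≤ trace M ^ 2) :
    M.IsSymm ∧ (M.PosSemidef ∨ (-M).PosSemidef) := by
  rcases le_or_gt 0 (trace M) with hT | hT
  · have h' : ∀ O : Matrix (Fin k) (Fin k) ℝ, Oᵀ * O = 1 → trace (M * O) ≤ trace M := by
      intro O hO
      have := h O hO
      nlinarith [sq_nonneg (trace (M * O) + trace M), sq_nonneg (trace (M * O) - trace M)]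
    obtain ⟨h1, h2⟩ := aux_psd h'
    exact ⟨h1, Or.inl h2⟩
  · have h' : ∀ O : Matrix (Fin k) (Fin k) ℝ, Oᵀ * O = 1 →
        trace ((-M) * O) ≤ trace (-M) := by
      intro O hO
      have := h O hO
      rw [Matrix.neg_mul, trace_neg, trace_neg]
      nlinarith [sq_nonneg (trace (M * O) + trace M), sq_nonneg (trace (M * O) - trace M)]
    obtain ⟨h1, h2⟩ := aux_psd h'
    refine ⟨?_, Or.inr h2⟩
    unfold Matrix.IsSymm at h1 ⊢
    rw [transpose_neg, neg_inj] at h1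
    exact h1

lemma trace_conj_pos {n k : ℕ} (hk : 1 ≤ k) {A : Matrix (Fin n) (Fin n) ℝ} (hA : A.PosDef)
    (X : Matrix (Fin n) (Fin k) ℝ) (hX : Xᵀ * X = 1) : 0 < trace (Xᵀ * A * X) := by
  have hcol : ∀ j : Fin k, (fun p => X p j) ≠ 0 := by
    intro j hf
    have h1 : ∑ p, X p j * X p j = 1 := by
      have := congrFun (congrFun hX j) j
      simpa [mul_apply, transpose_apply, one_apply] using this
    have h0 : (1:ℝ) = 0 := by
      rw [← h1]
      exact Finset.sum_eq_zero fun p _ => by rw [congrFun hf p]; simp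
    norm_num at h0
  have hterm : ∀ j : Fin k, 0 < (Xᵀ * A * X) j j := by
    intro j
    have hq := hA.dotProduct_mulVec_pos (hcol j)
    have he : (Xᵀ * A * X) j j = dotProduct (star fun p => X p j) (A *ᵥ fun p => X p j) := by
      simp only [mul_apply, transpose_apply, dotProduct, mulVec, Pi.star_apply, star_trivial,
        Finset.sum_mul, Finset.mul_sum]
      rw [Finset.sum_comm]
      exact Finset.sum_congr rfl fun p _ => Finset.sum_congr rfl fun r _ => by ring
    rw [he]
    exact hq
  have htr : trace (Xᵀ * A * X) = ∑ j, (Xᵀ * A * X) j j := rfl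
  rw [htr]
  exact Finset.sum_pos (fun j _ => hterm j) ⟨⟨0, hk⟩, Finset.mem_univ _⟩

end OCCA

/-- The OCCA objective
`F(X, Y) = tr(XᵀCY)² / (tr(XᵀAX) · tr(YᵀBY))` with `A = S₁S₁ᵀ`, `B = S₂S₂ᵀ`, `C = S₁S₂ᵀ`. -/
noncomputable def Fobj {n m k q : ℕ}
    (S₁ : Matrix (Fin n) (Fin q) ℝ) (S₂ : Matrix (Fin m) (Fin q) ℝ)
    (X : Matrix (Fin n) (Fin k) ℝ) (Y : Matrix (Fin m) (Fin k) ℝ) : ℝ :=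
  (Matrix.trace (Xᵀ * (S₁ * S₂ᵀ) * Y)) ^ 2 /
    (Matrix.trace (Xᵀ * (S₁ * S₁ᵀ) * X) * Matrix.trace (Yᵀ * (S₂ * S₂ᵀ) * Y))

/-- at a global maximizer `(X_opt, Y_opt)` of `F` over the product of Stiefel
manifolds (with `C = S₁S₂ᵀ ≠ 0`), the matrix `X_optᵀ C Y_opt` is symmetric and is either
positive semidefinite or negative semidefinite. -/
theorem isSymm_and_semidef_of_isMaxOn_Fobj
    (n m k q : ℕ) (hk1 : 1 ≤ k) (hkn : k < n) (hkm : k < m)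
    (S₁ : Matrix (Fin n) (Fin q) ℝ) (S₂ : Matrix (Fin m) (Fin q) ℝ)
    (hA : (S₁ * S₁ᵀ).PosDef) (hB : (S₂ * S₂ᵀ).PosDef) (hC : S₁ * S₂ᵀ ≠ 0)
    (Xopt : Matrix (Fin n) (Fin k) ℝ) (Yopt : Matrix (Fin m) (Fin k) ℝ)
    (hXopt : Xoptᵀ * Xopt = 1) (hYopt : Yoptᵀ * Yopt = 1)
    (hmax : ∀ (X : Matrix (Fin n) (Fin k) ℝ) (Y : Matrix (Fin m) (Fin k) ℝ),
      Xᵀ * X = 1 → Yᵀ * Y = 1 → Fobj S₁ S₂ X Y ≤ Fobj S₁ S₂ Xopt Yopt) :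
    (Xoptᵀ * (S₁ * S₂ᵀ) * Yopt).IsSymm ∧
      ((Xoptᵀ * (S₁ * S₂ᵀ) * Yopt).PosSemidef ∨ (-(Xoptᵀ * (S₁ * S₂ᵀ) * Yopt)).PosSemidef) := by
  have hdX : 0 < trace (Xoptᵀ * (S₁ * S₁ᵀ) * Xopt) := OCCA.trace_conj_pos hk1 hA Xopt hXopt
  have hdY : 0 < trace (Yoptᵀ * (S₂ * S₂ᵀ) * Yopt) := OCCA.trace_conj_pos hk1 hB Yopt hYopt
  have hkey : ∀ O : Matrix (Fin k) (Fin k) ℝ, Oᵀ * O = 1 →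
      trace ((Xoptᵀ * (S₁ * S₂ᵀ) * Yopt) * O) ^ 2 ≤ trace (Xoptᵀ * (S₁ * S₂ᵀ) * Yopt) ^ 2 := by
    intro O hO
    have hOO : O * Oᵀ = 1 := mul_eq_one_comm.mp hO
    have hY' : (Yopt * O)ᵀ * (Yopt * O) = 1 := by
      rw [transpose_mul, Matrix.mul_assoc, ← Matrix.mul_assoc Yoptᵀ Yopt O, hYopt,
        Matrix.one_mul, hO]
    have hden : trace ((Yopt * O)ᵀ * (S₂ * S₂ᵀ) * (Yopt * O)) =
        trace (Yoptᵀ * (S₂ * S₂ᵀ) * Yopt) := by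
      have e : (Yopt * O)ᵀ * (S₂ * S₂ᵀ) * (Yopt * O) =
          Oᵀ * (Yoptᵀ * (S₂ * S₂ᵀ) * Yopt) * O := by
        rw [transpose_mul]
        simp only [Matrix.mul_assoc]
      rw [e, Matrix.mul_assoc, trace_mul_comm, Matrix.mul_assoc, hOO, Matrix.mul_one]
    have hnum : Xoptᵀ * (S₁ * S₂ᵀ) * (Yopt * O) = (Xoptᵀ * (S₁ * S₂ᵀ) * Yopt) * O := by
      simp only [Matrix.mul_assoc]
    have hF := hmax Xopt (Yopt * O) hXopt hY'
    unfold Fobj at hF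
    rw [hnum, hden] at hF
    exact (div_le_div_iff_of_pos_right (mul_pos hdX hdY)).mp hF
  exact OCCA.key_lemma _ hkey
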